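/- Let (T,w) be a weighted tree with total weight n > 0, where weights are non-negative integers. Then all centroids of (T,w) lie on a path P with endpoints c1 and c2 such that the total weight of all vertices in the maximal subtree of T containing the internal vertices of P but not its endpoints is zero. Moreover, if c1 ≠ c2 then hs(c1) = hs(c2) = n/2, and the components of T − E(P) containing c1 and c2 each have weight n/2; if c1 = c2 = c then hs(c) < n/2. -/

import Mathlib

open SimpleGraph
open scoped Classical

/-- Weight of the connected component of `u` in `T - v`: total weight of all vertices
reachable from `u` by a walk avoiding `v`. -/
noncomputable def compWeight {V : Type*} [Fintype V] (T : SimpleGraph V) (w : V → ℕ)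
    (v u : V) : ℕ :=
  ∑ y : V, if ∃ p : T.Walk u y, v ∉ p.support then w y else 0

/-- The heaviest subtree weight of `v`: maximum weight of a connected component of `T - v`. -/
noncomputable def hs {V : Type*} [Fintype V] (T : SimpleGraph V) (w : V → ℕ) (v : V) : ℕ :=
  Finset.univ.sup fun u => compWeight T w v u

/-- A centroid is a vertex minimizing the heaviest subtree weight. -/
def IsCentroid {V : Type*} [Fintype V] (T : SimpleGraph V) (w : V → ℕ) (v : V) : Prop :=
  ∀ u, hs T w v ≤ hs T w u
/-- Weight of the maximal subtree of T containing c but no other vertex of the path p: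
the total weight of vertices reachable from c via a walk meeting p only at c. -/
noncomputable def sideWeight {V : Type*} [Fintype V] (T : SimpleGraph V) (w : V → ℕ)
    {a b : V} (p : T.Walk a b) (c : V) : ℕ :=
  ∑ y : V, if ∃ q : T.Walk c y, ∀ x ∈ q.support, x ∈ p.support → x = c then w y else 0

set_option linter.unusedSectionVars false
namespace CentroidProof

variable {V : Type*} [Fintype V] {T : SimpleGraph V} {w : V → ℕ}

/-- `y` is reachable from `u` by a walk avoiding `v`. -/
def Rel (T : SimpleGraph V) (v u y : V) : Prop := ∃ p : T.Walk u y, v ∉ p.support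

lemma compWeight_def (v u : V) :
    compWeight T w v u = ∑ y : V, if Rel T v u y then w y else 0 := rfl

lemma rel_refl {v u : V} (h : u ≠ v) : Rel T v u u :=
  ⟨Walk.nil, by simp [Ne.symm h]⟩

lemma rel_symm {v u y : V} : Rel T v u y → Rel T v y u := by
  rintro ⟨p, hp⟩
  exact ⟨p.reverse, by simpa [Walk.support_reverse] using hp⟩

lemma rel_trans {v u y z : V} : Rel T v u y → Rel T v y z → Rel T v u z := by
  rintro ⟨p, hp⟩ ⟨q, hq⟩
  exact ⟨p.append q, by simp [Walk.mem_support_append_iff, hp, hq]⟩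

lemma compWeight_mono {v u v' u' : V} (h : ∀ y, Rel T v u y → Rel T v' u' y) :
    compWeight T w v u ≤ compWeight T w v' u' := by
  simp only [compWeight_def]
  refine Finset.sum_le_sum fun y _ => ?_
  by_cases hy : Rel T v u y
  · rw [if_pos hy, if_pos (h y hy)]
  · rw [if_neg hy]; exact Nat.zero_le _

lemma compWeight_congr {v u u' : V} (h : Rel T v u u') :
    compWeight T w v u = compWeight T w v u' :=
  le_antisymm (compWeight_mono fun _ hy => rel_trans (rel_symm h) hy)
    (compWeight_mono fun _ hy => rel_trans h hy)

lemma compWeight_self (v : V) : compWeight T w v v = 0 := by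
  simp only [compWeight_def]
  refine Finset.sum_eq_zero fun y _ => ?_
  rw [if_neg]
  rintro ⟨p, hp⟩
  exact hp p.start_mem_support

lemma le_hs {v u : V} : compWeight T w v u ≤ hs T w v :=
  Finset.le_sup (Finset.mem_univ u)

lemma hs_exists [Nonempty V] (v : V) : ∃ u, hs T w v = compWeight T w v u := by
  obtain ⟨u, -, h⟩ := Finset.exists_mem_eq_sup Finset.univ Finset.univ_nonempty
    (fun u => compWeight T w v u)
  exact ⟨u, h⟩

noncomputable def thePath (hT : T.IsTree) (x y : V) : T.Walk x y :=
  (hT.existsUnique_path x y).choose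

lemma thePath_isPath (hT : T.IsTree) (x y : V) : (thePath hT x y).IsPath :=
  (hT.existsUnique_path x y).choose_spec.1

lemma eq_thePath (hT : T.IsTree) {x y : V} (q : T.Walk x y) (hq : q.IsPath) :
    q = thePath hT x y :=
  (hT.existsUnique_path x y).choose_spec.2 q hq

lemma mem_of_mem_thePath (hT : T.IsTree) {x y t : V}
    (h : t ∈ (thePath hT x y).support) (q : T.Walk x y) : t ∈ q.support := by
  have hb : q.bypass = thePath hT x y := eq_thePath hT _ q.bypass_isPath
  exact q.support_bypass_subset (hb ▸ h)

lemma not_rel_of_mem_thePath (hT : T.IsTree) {x y t : V}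
    (h : t ∈ (thePath hT x y).support) : ¬ Rel T t x y := by
  rintro ⟨q, hq⟩
  exact hq (mem_of_mem_thePath hT h q)

lemma dropUntil_avoid {x y t : V} {q : T.Walk x y} (hq : q.IsPath) (h : t ∈ q.support)
    (hne : x ≠ t) : x ∉ (q.dropUntil t h).support := by
  intro hx
  have hnodup : q.support.Nodup := hq.support_nodup
  rw [← q.take_spec h, Walk.support_append] at hnodup
  have hx1 : x ∈ (q.takeUntil t h).support := Walk.start_mem_support _
  have hx2 : x ∈ (q.dropUntil t h).support.tail := by
    have hc := (q.dropUntil t h).support_eq_cons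
    rw [hc, List.mem_cons] at hx
    exact hx.resolve_left hne
  exact (List.nodup_append'.mp hnodup).2.2 hx1 hx2

lemma not_rel_both (hT : T.IsTree) {a b y : V} (hadj : T.Adj a b) :
    ¬(Rel T a b y ∧ Rel T b a y) := by
  rintro ⟨⟨p, hp⟩, ⟨q, hq⟩⟩
  have hbr : T.IsBridge s(b, a) :=
    (isAcyclic_iff_forall_adj_isBridge.mp hT.IsAcyclic) hadj.symm
  have hmem := (isBridge_iff_adj_and_forall_walk_mem_edges.mp hbr) (p.append q.reverse)
  rw [Walk.edges_append, List.mem_append] at hmem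
  rcases hmem with h | h
  · exact hp (p.snd_mem_support_of_mem_edges h)
  · rw [Walk.edges_reverse, List.mem_reverse] at h
    exact hq (q.fst_mem_support_of_mem_edges h)

lemma rel_total (hT : T.IsTree) {a b : V} (hadj : T.Adj a b) (y : V) :
    Rel T a b y ∨ Rel T b a y := by
  by_cases h : a ∈ (thePath hT b y).support
  · exact Or.inr ⟨(thePath hT b y).dropUntil a h,
      dropUntil_avoid (thePath_isPath hT b y) h hadj.ne'⟩
  · exact Or.inl ⟨thePath hT b y, h⟩

lemma edge_split (hT : T.IsTree) {a b : V} (hadj : T.Adj a b) :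
    compWeight T w a b + compWeight T w b a = ∑ v, w v := by
  simp only [compWeight_def, ← Finset.sum_add_distrib]
  refine Finset.sum_congr rfl fun y _ => ?_
  rcases rel_total hT hadj y with h | h
  · rw [if_pos h, if_neg (fun h' => not_rel_both hT hadj ⟨h, h'⟩), add_zero]
  · rw [if_neg (fun h' => not_rel_both hT hadj ⟨h', h⟩), if_pos h, zero_add]

lemma comp_subset (hT : T.IsTree) {v u' y : V} (hadj : T.Adj v u')
    (hny : ¬ Rel T u' v y) : ∀ z, Rel T u' y z → Rel T v u' z := by
  intro z hz
  by_cases h : v ∈ (thePath hT u' z).support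
  · exfalso
    have h1 : Rel T u' v z := ⟨(thePath hT u' z).dropUntil v h,
      dropUntil_avoid (thePath_isPath hT u' z) h hadj.ne'⟩
    exact hny (rel_trans h1 (rel_symm hz))
  · exact ⟨thePath hT u' z, h⟩

lemma hs_le_max (hT : T.IsTree) {v u' : V} (hadj : T.Adj v u') :
    hs T w u' ≤ max (compWeight T w u' v) (compWeight T w v u') := by
  refine Finset.sup_le fun y _ => ?_
  by_cases h1 : Rel T u' v y
  · rw [compWeight_congr (rel_symm h1)]
    exact le_max_left _ _
  · by_cases h2 : y = u'
    · subst h2; rw [compWeight_self]; exact Nat.zero_le _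
    · exact le_trans (compWeight_mono (comp_subset hT hadj h1)) (le_max_right _ _)

lemma sep_bound (hT : T.IsTree) {t x : V} (hne : t ≠ x) :
    (∑ v, w v) ≤ compWeight T w t x + compWeight T w x t := by
  have hpt : ∀ y, Rel T t x y ∨ Rel T x t y := by
    intro y
    by_cases h : t ∈ (thePath hT x y).support
    · exact Or.inr ⟨(thePath hT x y).dropUntil t h,
        dropUntil_avoid (thePath_isPath hT x y) h (Ne.symm hne)⟩
    · exact Or.inl ⟨thePath hT x y, h⟩
  simp only [compWeight_def, ← Finset.sum_add_distrib]
  refine Finset.sum_le_sum fun y _ => ?_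
  rcases hpt y with h | h
  · rw [if_pos h]; exact Nat.le_add_right _ _
  · rw [if_pos h]; exact Nat.le_add_left _ _

lemma neighbor_toward (hT : T.IsTree) {v u : V} (hne : v ≠ u) :
    ∃ u', T.Adj v u' ∧ Rel T v u' u ∧ u' ∈ (thePath hT v u).support := by
  obtain ⟨u', h, p', hp⟩ := Walk.exists_eq_cons_of_ne hne (thePath hT v u)
  have hpath := thePath_isPath hT v u
  rw [hp, Walk.cons_isPath_iff] at hpath
  refine ⟨u', h, ⟨p', hpath.2⟩, ?_⟩
  rw [hp, Walk.support_cons]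
  exact List.mem_cons_of_mem _ p'.start_mem_support

lemma two_hs_min_le (hT : T.IsTree) {c : V}
    (hmin : ∀ x, hs T w c ≤ hs T w x) : 2 * hs T w c ≤ ∑ v, w v := by
  by_contra hlt
  push_neg at hlt
  have : Nonempty V := ⟨c⟩
  obtain ⟨u, hu⟩ := hs_exists (T := T) (w := w) c
  have hne : c ≠ u := by
    rintro rfl
    rw [compWeight_self] at hu
    omega
  obtain ⟨u0, hadj0, hrel0, -⟩ := neighbor_toward hT hne
  have hcw : hs T w c = compWeight T w c u0 := by
    rw [hu]; exact (compWeight_congr hrel0).symm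
  have key : ∀ k (v u' : V), T.Adj v u' → (∀ x, hs T w v ≤ hs T w x) →
      hs T w v = compWeight T w v u' → (∑ x, w x) < 2 * compWeight T w v u' →
      (Finset.univ.filter fun z => Rel T v u' z).card ≤ k → False := by
    intro k
    induction k with
    | zero =>
      intro v u' hadj _ _ _ hcard
      have hm : u' ∈ Finset.univ.filter fun z => Rel T v u' z :=
        Finset.mem_filter.mpr ⟨Finset.mem_univ _, rel_refl hadj.ne'⟩
      have := Finset.card_pos.mpr ⟨u', hm⟩
      omega
    | succ k ih =>
      intro v u' hadj hmin2 heq hgt hcard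
      have hsplit := edge_split (w := w) hT hadj
      have hlt1 : compWeight T w u' v < compWeight T w v u' := by omega
      have hhs : hs T w u' = compWeight T w v u' := by
        have h1 := hs_le_max (w := w) hT hadj
        have h2 := hmin2 u'
        rw [heq] at h2
        rw [max_eq_right hlt1.le] at h1
        omega
      obtain ⟨y, hy⟩ := hs_exists (T := T) (w := w) u'
      have hyne : u' ≠ y := by
        rintro rfl
        rw [compWeight_self] at hy
        omega
      have hnrel : ¬ Rel T u' v y := by
        intro h
        have hcc := compWeight_congr (w := w) (rel_symm h)
        omega
      obtain ⟨u'', hadj', hrel', -⟩ := neighbor_toward hT hyne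
      have hnrel'' : ¬ Rel T u' v u'' := fun h => hnrel (rel_trans h hrel')
      have hcc' := compWeight_congr (w := w) hrel'
      have hsub := comp_subset (hT := hT) hadj hnrel''
      have hssub : (Finset.univ.filter fun z => Rel T u' u'' z) ⊂
          Finset.univ.filter fun z => Rel T v u' z := by
        constructor
        · intro z hz
          rw [Finset.mem_filter] at hz ⊢
          exact ⟨Finset.mem_univ _, hsub z hz.2⟩
        · intro hsup
          have hm : u' ∈ Finset.univ.filter fun z => Rel T v u' z :=
            Finset.mem_filter.mpr ⟨Finset.mem_univ _, rel_refl hadj.ne'⟩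
          have hm2 := hsup hm
          rw [Finset.mem_filter] at hm2
          obtain ⟨-, q, hq⟩ := hm2
          exact hq q.end_mem_support
      have hlt2 := Finset.card_lt_card hssub
      have hvv : hs T w u' = hs T w v := by omega
      exact ih u' u'' hadj' (fun x => hvv ▸ hmin2 x) (by omega) (by omega) (by omega)
  exact key Finset.univ.card c u0 hadj0 hmin hcw (by omega)
    (Finset.card_filter_le _ _)

lemma unique_small (hT : T.IsTree) {x y : V}
    (hx : 2 * hs T w x < ∑ v, w v) (hy : 2 * hs T w y < ∑ v, w v) : x = y := by
  by_contra hne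
  obtain ⟨x', hadj, hrel, hmem⟩ := neighbor_toward hT hne
  have hsplit := edge_split (w := w) hT hadj
  have h1 : compWeight T w x x' ≤ hs T w x := le_hs
  have hsub : ∀ z, Rel T x' x z → Rel T y x z := by
    rintro z ⟨r0, hr0⟩
    have hxs : x' ∉ (thePath hT x z).support := fun h => hr0 (mem_of_mem_thePath hT h r0)
    by_cases hyy : y ∈ (thePath hT x z).support
    · exfalso
      have htU : ((thePath hT x z).takeUntil y hyy).IsPath :=
        (thePath_isPath hT x z).takeUntil hyy
      have hEq := eq_thePath hT _ htU
      have hx' : x' ∈ ((thePath hT x z).takeUntil y hyy).support := by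
        rw [hEq]; exact hmem
      exact hxs ((thePath hT x z).support_takeUntil_subset hyy hx')
    · exact ⟨thePath hT x z, hyy⟩
  have h2 : compWeight T w x' x ≤ compWeight T w y x := compWeight_mono hsub
  have h3 : compWeight T w y x ≤ hs T w y := le_hs
  omega

lemma exists_first_meet {z c : V} (q : T.Walk z c) (S : V → Prop) (hc : S c) :
    ∃ t, S t ∧ ∃ (r1 : T.Walk z t) (r2 : T.Walk t c), r1.append r2 = q ∧
      ∀ x ∈ r1.support, S x → x = t := by
  induction q with
  | nil =>
    exact ⟨_, hc, Walk.nil, Walk.nil, rfl, by simp⟩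
  | @cons a b c' h q' ih =>
    by_cases hz : S a
    · exact ⟨a, hz, Walk.nil, Walk.cons h q', rfl, by simp⟩
    · obtain ⟨t, ht, r1, r2, happ, hmeet⟩ := ih hc
      refine ⟨t, ht, Walk.cons h r1, r2, by rw [Walk.cons_append, happ], ?_⟩
      intro x hx hS
      rw [Walk.support_cons, List.mem_cons] at hx
      rcases hx with hx | hx
      · exact absurd (hx ▸ hS) hz
      · exact hmeet x hx hS

lemma isPath_append' {u v x : V} {p : T.Walk u v} {q : T.Walk v x}
    (hp : p.IsPath) (hq : q.IsPath)
    (hmeet : ∀ y ∈ p.support, y ∈ q.support → y = v) : (p.append q).IsPath := by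
  rw [Walk.isPath_def, Walk.support_append, List.nodup_append']
  refine ⟨hp.support_nodup, (List.tail_sublist _).nodup hq.support_nodup, ?_⟩
  intro y hy1 hy2
  have hy3 : y ∈ q.support := by
    rw [q.support_eq_cons]
    exact List.mem_cons_of_mem _ hy2
  have hyv : y = v := hmeet y hy1 hy3
  subst hyv
  have hnodup := hq.support_nodup
  rw [q.support_eq_cons] at hnodup
  exact (List.nodup_cons.mp hnodup).1 hy2


lemma side_main (hT : T.IsTree) {a b : V} (hab : a ≠ b) :
    (∑ v, w v) ≤ sideWeight T w (thePath hT a b) a + hs T w a := by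
  obtain ⟨a', hadj, p', hp⟩ := Walk.exists_eq_cons_of_ne hab (thePath hT a b)
  have hpath := thePath_isPath hT a b
  have hpath2 := hpath
  rw [hp, Walk.cons_isPath_iff] at hpath2
  have hiff : ∀ y, (∃ q : T.Walk a y,
      ∀ x ∈ q.support, x ∈ (thePath hT a b).support → x = a) ↔ Rel T a' a y := by
    intro y
    constructor
    · rintro ⟨q, hq⟩
      refine ⟨q, fun hmem => hadj.ne' (hq a' hmem ?_)⟩
      rw [hp, Walk.support_cons]
      exact List.mem_cons_of_mem _ p'.start_mem_support
    · rintro ⟨r0, hr0⟩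
      have hr : a' ∉ (thePath hT a y).support :=
        fun hmem => hr0 (mem_of_mem_thePath hT hmem r0)
      refine ⟨thePath hT a y, fun x hxr hxp => ?_⟩
      by_contra hxa
      have hxp' : x ∈ p'.support := by
        rw [hp, Walk.support_cons, List.mem_cons] at hxp
        exact hxp.resolve_left hxa
      have w1 : Rel T a a' x := ⟨p'.takeUntil x hxp', fun hmem =>
        hpath2.2 (p'.support_takeUntil_subset hxp' hmem)⟩
      have w2 : Rel T a' a x := ⟨(thePath hT a y).takeUntil x hxr, fun hmem =>
        hr ((thePath hT a y).support_takeUntil_subset hxr hmem)⟩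
      exact not_rel_both hT hadj ⟨w1, w2⟩
  have heq : sideWeight T w (thePath hT a b) a = compWeight T w a' a := by
    rw [compWeight_def]
    unfold sideWeight
    exact Finset.sum_congr rfl fun y _ => if_congr (hiff y) rfl rfl
  have hsplit := edge_split (w := w) hT hadj
  have h1 : compWeight T w a a' ≤ hs T w a := le_hs
  omega

lemma side_disj (hT : T.IsTree) {a b : V} (hab : a ≠ b) :
    sideWeight T w (thePath hT a b) a + sideWeight T w (thePath hT a b) b ≤ ∑ v, w v := by
  obtain ⟨a', hadj, p', hp⟩ := Walk.exists_eq_cons_of_ne hab (thePath hT a b)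
  have hpath := thePath_isPath hT a b
  have hpath2 := hpath
  rw [hp, Walk.cons_isPath_iff] at hpath2
  unfold sideWeight
  rw [← Finset.sum_add_distrib]
  refine Finset.sum_le_sum fun y _ => ?_
  by_cases h1 : ∃ q : T.Walk a y, ∀ x ∈ q.support, x ∈ (thePath hT a b).support → x = a
  · rw [if_pos h1]
    by_cases h2 : ∃ q : T.Walk b y, ∀ x ∈ q.support, x ∈ (thePath hT a b).support → x = b
    · exfalso
      obtain ⟨q1, hq1⟩ := h1
      obtain ⟨q2, hq2⟩ := h2
      have w1 : Rel T a' a y := ⟨q1, fun hmem => hadj.ne' (hq1 a' hmem (by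
        rw [hp, Walk.support_cons]
        exact List.mem_cons_of_mem _ p'.start_mem_support))⟩
      have w2 : Rel T a a' y := by
        refine ⟨p'.append q2, ?_⟩
        rw [Walk.mem_support_append_iff]
        rintro (hm | hm)
        · exact hpath2.2 hm
        · exact hab (hq2 a hm (by rw [hp]; exact Walk.start_mem_support _))
      exact not_rel_both hT hadj ⟨w2, w1⟩
    · rw [if_neg h2]; simp
  · rw [if_neg h1]
    simp only [zero_add]
    split_ifs <;> simp

end CentroidProof

open CentroidProof

theorem stmt_4 {V : Type*} [Fintype V] (T : SimpleGraph V) (w : V → ℕ) (hT : T.IsTree)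
    (hw : 0 < ∑ v, w v) :
    ∃ (c1 c2 : V) (p : T.Walk c1 c2), p.IsPath ∧
      IsCentroid T w c1 ∧ IsCentroid T w c2 ∧
      (∀ v, IsCentroid T w v → v ∈ p.support) ∧
      (c1 ≠ c2 →
        sideWeight T w p c1 + sideWeight T w p c2 = ∑ v, w v ∧
        2 * hs T w c1 = ∑ v, w v ∧ 2 * hs T w c2 = ∑ v, w v ∧
        2 * sideWeight T w p c1 = ∑ v, w v ∧ 2 * sideWeight T w p c2 = ∑ v, w v) ∧
      (c1 = c2 → 2 * hs T w c1 < ∑ v, w v) := by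
  have hneV : Nonempty V := by
    by_contra h
    rw [not_nonempty_iff] at h
    haveI := h
    rw [Finset.univ_eq_empty, Finset.sum_empty] at hw
    exact lt_irrefl 0 hw
  obtain ⟨c, -, hmin'⟩ := Finset.exists_min_image Finset.univ (hs T w)
    ⟨Classical.arbitrary V, Finset.mem_univ _⟩
  have hmin : ∀ x, hs T w c ≤ hs T w x := fun x => hmin' x (Finset.mem_univ x)
  have hc2 : 2 * hs T w c ≤ ∑ v, w v := two_hs_min_le hT hmin
  by_cases hcase : 2 * hs T w c < ∑ v, w v
  · refine ⟨c, c, Walk.nil, Walk.IsPath.nil, hmin, hmin, ?_, fun h => absurd rfl h,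
      fun _ => hcase⟩
    intro z hz
    have hvc : hs T w z = hs T w c := le_antisymm (hz c) (hmin z)
    have hzc : z = c := unique_small hT (x := z) (y := c) (by omega) hcase
    rw [hzc, Walk.support_nil]
    simp
  · have hEq : 2 * hs T w c = ∑ v, w v := by omega
    obtain ⟨u, hu⟩ := hs_exists (T := T) (w := w) c
    have hcu : c ≠ u := by
      rintro rfl
      rw [compWeight_self] at hu
      omega
    obtain ⟨u', hadj, hrel, -⟩ := neighbor_toward hT hcu
    have hcwu : compWeight T w c u' = hs T w c := by
      rw [hu]
      exact compWeight_congr hrel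
    have hsplitu := edge_split (w := w) hT hadj
    have hu'cent : IsCentroid T w u' := by
      intro x
      have h1 := hs_le_max (w := w) hT hadj
      have hcc : compWeight T w u' c = hs T w c := by omega
      rw [hcwu, hcc, max_self] at h1
      exact le_trans h1 (hmin x)
    have hccent : IsCentroid T w c := hmin
    set C := Finset.univ.filter (fun x => IsCentroid T w x) with hC
    have hmemC : ∀ x, x ∈ C ↔ IsCentroid T w x := fun x => by simp [hC]
    have hCne : ((C ×ˢ C) : Finset (V × V)).Nonempty :=
      ⟨(c, c), Finset.mem_product.mpr ⟨(hmemC c).mpr hccent, (hmemC c).mpr hccent⟩⟩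
    obtain ⟨⟨c1, c2⟩, hprmem, hmax'⟩ := Finset.exists_max_image (C ×ˢ C)
      (fun pr => (thePath hT pr.1 pr.2).length) hCne
    rw [Finset.mem_product] at hprmem
    have hc1cent : IsCentroid T w c1 := (hmemC _).mp hprmem.1
    have hc2cent : IsCentroid T w c2 := (hmemC _).mp hprmem.2
    have hmax : ∀ x y, IsCentroid T w x → IsCentroid T w y →
        (thePath hT x y).length ≤ (thePath hT c1 c2).length := fun x y hx hy =>
      hmax' (x, y) (Finset.mem_product.mpr ⟨(hmemC x).mpr hx, (hmemC y).mpr hy⟩)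
    have hcent_hs : ∀ x, IsCentroid T w x → hs T w x = hs T w c := fun x hx =>
      le_antisymm (hx c) (hmin x)
    have hne12 : c1 ≠ c2 := by
      intro h
      subst h
      have hnil : (thePath hT c1 c1) = Walk.nil :=
        (eq_thePath hT Walk.nil Walk.IsPath.nil).symm
      have hsingle : (Walk.cons hadj Walk.nil : T.Walk c u').IsPath :=
        Walk.IsPath.nil.cons (by simp [hadj.ne])
      have h1 := hmax c u' hccent hu'cent
      rw [← eq_thePath hT _ hsingle, hnil] at h1
      simp at h1
    have hp : (thePath hT c1 c2).IsPath := thePath_isPath hT c1 c2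
    refine ⟨c1, c2, thePath hT c1 c2, hp, hc1cent, hc2cent, ?_, ?_,
      fun h => absurd h hne12⟩
    · intro z hz
      by_contra hzp
      have hzc : hs T w z = hs T w c := hcent_hs z hz
      obtain ⟨t, htS, r1, r2, happ, hmeet⟩ := exists_first_meet (thePath hT z c1)
        (fun x => x ∈ (thePath hT c1 c2).support) (Walk.start_mem_support _)
      have hq : (thePath hT z c1).IsPath := thePath_isPath hT z c1
      have hr1 : r1.IsPath := by
        rw [← happ] at hq
        exact hq.of_append_left
      have hzt : z ≠ t := fun h => hzp (h ▸ htS)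
      have hr1len : 1 ≤ r1.length := by
        rcases Nat.eq_zero_or_pos r1.length with h | h
        · exact absurd (Walk.eq_of_length_eq_zero h) hzt
        · exact h
      have htq : t ∈ (thePath hT z c1).support := by
        rw [← happ]
        exact Walk.subset_support_append_left r1 r2 r1.end_mem_support
      by_cases ht1 : t = c1
      · subst ht1
        have hr : (r1.append (thePath hT t c2)).IsPath := isPath_append' hr1 hp hmeet
        have h1 := hmax z c2 hz hc2cent
        rw [← eq_thePath hT _ hr, Walk.length_append] at h1
        omega
      by_cases ht2 : t = c2
      · subst ht2
        have hrev : (thePath hT c1 t).reverse.IsPath := hp.reverse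
        have hmeet' : ∀ x ∈ r1.support, x ∈ (thePath hT c1 t).reverse.support → x = t := by
          intro x hx hx2
          rw [Walk.support_reverse, List.mem_reverse] at hx2
          exact hmeet x hx hx2
        have hr : (r1.append (thePath hT c1 t).reverse).IsPath :=
          isPath_append' hr1 hrev hmeet'
        have h1 := hmax z c1 hz hc1cent
        rw [← eq_thePath hT _ hr, Walk.length_append, Walk.length_reverse] at h1
        omega
      · have hn1 : ¬ Rel T t c1 c2 := not_rel_of_mem_thePath hT htS
        have hteq : (thePath hT z c1).reverse = thePath hT c1 z :=
          eq_thePath hT _ hq.reverse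
        have hn2 : ¬ Rel T t c1 z := by
          apply not_rel_of_mem_thePath hT (x := c1) (y := z)
          rw [← hteq, Walk.support_reverse, List.mem_reverse]
          exact htq
        have hn3 : ¬ Rel T t c2 z := by
          have hdrop : ((thePath hT c1 c2).dropUntil t htS).IsPath := hp.dropUntil htS
          have hmeet'' : ∀ x ∈ r1.support,
              x ∈ ((thePath hT c1 c2).dropUntil t htS).support → x = t :=
            fun x hx hx2 => hmeet x hx ((thePath hT c1 c2).support_dropUntil_subset htS hx2)
          have hr : (r1.append ((thePath hT c1 c2).dropUntil t htS)).IsPath :=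
            isPath_append' hr1 hdrop hmeet''
          apply not_rel_of_mem_thePath hT (x := c2) (y := z)
          rw [← eq_thePath hT _ hr.reverse, Walk.support_reverse, List.mem_reverse,
            Walk.mem_support_append_iff]
          exact Or.inl r1.end_mem_support
        have hb1 := sep_bound (w := w) hT ht1
        have hle1 : compWeight T w c1 t ≤ hs T w c1 := le_hs
        have hb2 := sep_bound (w := w) hT ht2
        have hle2 : compWeight T w c2 t ≤ hs T w c2 := le_hs
        have hb3 := sep_bound (w := w) hT (Ne.symm hzt)
        have hle3 : compWeight T w z t ≤ hs T w z := le_hs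
        have hdisj : compWeight T w t c1 + compWeight T w t c2 + compWeight T w t z
            ≤ ∑ v, w v := by
          simp only [compWeight_def, ← Finset.sum_add_distrib]
          refine Finset.sum_le_sum fun y _ => ?_
          by_cases h1 : Rel T t c1 y <;> by_cases h2 : Rel T t c2 y <;>
            by_cases h3 : Rel T t z y <;>
            first
              | exact absurd (rel_trans h1 (rel_symm h2)) hn1
              | exact absurd (rel_trans h1 (rel_symm h3)) hn2
              | exact absurd (rel_trans h2 (rel_symm h3)) hn3
              | simp [h1, h2, h3]
        have e1 := hcent_hs c1 hc1cent
        have e2 := hcent_hs c2 hc2cent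
        omega
    · intro _
      have hside1 := side_main (w := w) hT hne12
      have hside2' := side_main (w := w) hT (Ne.symm hne12)
      have hrevEq : (thePath hT c1 c2).reverse = thePath hT c2 c1 :=
        eq_thePath hT _ hp.reverse
      have hsame : sideWeight T w (thePath hT c2 c1) c2
          = sideWeight T w (thePath hT c1 c2) c2 := by
        rw [← hrevEq]
        unfold sideWeight
        refine Finset.sum_congr rfl fun y _ => if_congr ?_ rfl rfl
        constructor
        · rintro ⟨q, hq⟩
          exact ⟨q, fun x hx hxp => hq x hx (by
            rw [Walk.support_reverse, List.mem_reverse]; exact hxp)⟩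
        · rintro ⟨q, hq⟩
          exact ⟨q, fun x hx hxp => hq x hx (by
            rw [Walk.support_reverse, List.mem_reverse] at hxp; exact hxp)⟩
      have hdisj := side_disj (w := w) hT hne12
      have e1 := hcent_hs c1 hc1cent
      have e2 := hcent_hs c2 hc2cent
      rw [hsame] at hside2'
      refine ⟨by omega, by omega, by omega, by omega, by omega⟩
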